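/- For integers n,r≥4, the secure domination number of the lexicographic product K_{n,r}∘H equals 4 for every nontrivial graph H, where K_{n,r} is the complete bipartite graph. -/

import Mathlib

namespace SecureW

open Finset

/-- Lexicographic product of simple graphs. -/
def lexProd {α β : Type*} (G : SimpleGraph α) (H : SimpleGraph β) :
    SimpleGraph (α × β) where
  Adj p q := G.Adj p.1 q.1 ∨ (p.1 = q.1 ∧ H.Adj p.2 q.2)
  symm := by
    constructor
    rintro p q (h | ⟨h1, h2⟩)
    · exact Or.inl h.symm
    · exact Or.inr ⟨h1.symm, h2.symm⟩
  loopless := by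
    constructor
    rintro p (h | ⟨_, h⟩)
    · exact G.irrefl h
    · exact H.irrefl h

open scoped Classical in
/-- Sum of `f` over the open neighbourhood of `v`. -/
noncomputable def nbrSum {V : Type*} [Fintype V] (G : SimpleGraph V) (f : V → ℕ) (v : V) : ℕ :=
  ∑ u ∈ Finset.univ.filter (fun u => G.Adj v u), f u

/-- `f` is a `w`-dominating function, where `w` is given as a list `(w_0, …, w_l)`. -/
def IsWDom {V : Type*} [Fintype V] (G : SimpleGraph V) (ws : List ℕ) (f : V → ℕ) : Prop :=
  (∀ v, f v < ws.length) ∧ ∀ v, ws.getD (f v) 0 ≤ nbrSum G f v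

/-- The function obtained from `f` by moving one unit of weight from `u` to `v`. -/
def move {V : Type*} [DecidableEq V] (f : V → ℕ) (u v : V) : V → ℕ :=
  fun x => if x = v then 1 else if x = u then f u - 1 else f x

open scoped Classical in
/-- `f` is a secure `w`-dominating function. -/
def IsSecureWDom {V : Type*} [Fintype V] (G : SimpleGraph V) (ws : List ℕ) (f : V → ℕ) : Prop :=
  IsWDom G ws f ∧ ∀ v, f v = 0 → ∃ u, G.Adj v u ∧ 0 < f u ∧ IsWDom G ws (move f u v)

/-- The weight of a function. -/
noncomputable def weight {V : Type*} [Fintype V] (f : V → ℕ) : ℕ := ∑ v, f v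

/-- The `w`-domination number. -/
noncomputable def wDomNum {V : Type*} [Fintype V] (G : SimpleGraph V) (ws : List ℕ) : ℕ :=
  sInf {k | ∃ f, IsWDom G ws f ∧ weight f = k}

/-- The secure `w`-domination number. -/
noncomputable def secWDomNum {V : Type*} [Fintype V] (G : SimpleGraph V) (ws : List ℕ) : ℕ :=
  sInf {k | ∃ f, IsSecureWDom G ws f ∧ weight f = k}

/-- The (ordinary) domination number, as `γ_{(1,0)}`. -/
noncomputable def domNum {V : Type*} [Fintype V] (G : SimpleGraph V) : ℕ :=
  wDomNum G [1, 0]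

/-- `G` has no isolated vertex. -/
def NoIsolated {V : Type*} (G : SimpleGraph V) : Prop := ∀ v, ∃ u, G.Adj v u

end SecureW

set_option linter.unusedSectionVars false

namespace MyAux
open SecureW Finset
open scoped Classical

variable {V : Type*} [Fintype V]

lemma lexProd_adj {α γ : Type*} (G : SimpleGraph α) (H : SimpleGraph γ) (p q : α × γ) :
    (lexProd G H).Adj p q ↔ G.Adj p.1 q.1 ∨ (p.1 = q.1 ∧ H.Adj p.2 q.2) := Iff.rfl

lemma le_nbrSum (G : SimpleGraph V) (f : V → ℕ) {v u : V} (h : G.Adj v u) :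
    f u ≤ nbrSum G f v := by
  unfold nbrSum
  exact Finset.single_le_sum (fun i _ => Nat.zero_le _)
    (Finset.mem_filter.mpr ⟨Finset.mem_univ _, h⟩)

lemma nbrSum_eq_zero (G : SimpleGraph V) (f : V → ℕ) {v : V}
    (h : ∀ u, G.Adj v u → f u = 0) : nbrSum G f v = 0 := by
  unfold nbrSum
  exact Finset.sum_eq_zero (fun u hu => h u (Finset.mem_filter.mp hu).2)

lemma isWDom_iff (G : SimpleGraph V) (f : V → ℕ) :
    IsWDom G [1, 0] f ↔ (∀ v, f v ≤ 1) ∧ ∀ v, f v = 0 → 1 ≤ nbrSum G f v := by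
  unfold IsWDom
  constructor
  · rintro ⟨h1, h2⟩
    refine ⟨fun v => Nat.lt_succ_iff.mp (by simpa using h1 v), fun v hv => ?_⟩
    have := h2 v
    rw [hv] at this
    exact this
  · rintro ⟨h1, h2⟩
    refine ⟨fun v => Nat.lt_succ_of_le (h1 v), fun v => ?_⟩
    rcases Nat.le_one_iff_eq_zero_or_eq_one.mp (h1 v) with h | h
    · rw [h]; exact h2 v h
    · rw [h]; exact Nat.zero_le _

lemma exists_sum_zero {ι : Type*} [Fintype ι] (g : ι → ℕ)
    (h : ∑ i, g i < Fintype.card ι) : ∃ i, g i = 0 := by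
  by_contra hc
  push_neg at hc
  have h2 : Fintype.card ι ≤ ∑ i, g i := by
    calc Fintype.card ι = ∑ _i : ι, 1 := by simp
    _ ≤ ∑ i, g i := Finset.sum_le_sum (fun i _ => Nat.one_le_iff_ne_zero.mpr (hc i))
  omega

lemma move_le [DecidableEq V] (f : V → ℕ) (u v x : V) :
    move f u v x ≤ f x + (if x = v then 1 else 0) := by
  unfold move
  split_ifs with h1 h2
  · omega
  · subst h2; omega
  · omega


lemma upper {β : Type*} [Fintype β] (n r : ℕ) (hn : 4 ≤ n) (hr : 4 ≤ r)
    (H : SimpleGraph β) (hH : Nontrivial β) :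
    ∃ f, IsSecureWDom (lexProd (completeBipartiteGraph (Fin n) (Fin r)) H) [1, 0] f ∧
      weight f = 4 := by
  classical
  obtain ⟨y₀, -, -⟩ := hH
  set K := completeBipartiteGraph (Fin n) (Fin r) with hKdef
  set G := lexProd K H with hGdef
  set a0 : Fin n := ⟨0, by omega⟩ with ha0
  set a1 : Fin n := ⟨1, by omega⟩ with ha1
  set b0 : Fin r := ⟨0, by omega⟩ with hb0
  set b1 : Fin r := ⟨1, by omega⟩ with hb1
  have haa : a0 ≠ a1 := by simp [ha0, ha1, Fin.ext_iff]
  have hbb : b0 ≠ b1 := by simp [hb0, hb1, Fin.ext_iff]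
  set T : Finset ((Fin n ⊕ Fin r) × β) :=
    {(Sum.inl a0, y₀), (Sum.inl a1, y₀), (Sum.inr b0, y₀), (Sum.inr b1, y₀)} with hT
  set f : (Fin n ⊕ Fin r) × β → ℕ := fun x => if x ∈ T then 1 else 0 with hfdef
  have hmem1 : (Sum.inl a0, y₀) ∈ T := by simp [hT]
  have hmem2 : (Sum.inl a1, y₀) ∈ T := by simp [hT]
  have hmem3 : (Sum.inr b0, y₀) ∈ T := by simp [hT]
  have hmem4 : (Sum.inr b1, y₀) ∈ T := by simp [hT]
  have hf1 : ∀ x ∈ T, f x = 1 := by intro x hx; simp [hfdef, hx]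
  have hfle : ∀ x, f x ≤ 1 := by intro x; simp only [hfdef]; split <;> omega
  have hadjLR : ∀ (a : Fin n) (b : Fin r) (y z : β), G.Adj (Sum.inl a, y) (Sum.inr b, z) := by
    intro a b y z
    exact Or.inl (by simp [hKdef])
  have hadjRL : ∀ (b : Fin r) (a : Fin n) (y z : β), G.Adj (Sum.inr b, y) (Sum.inl a, z) := by
    intro b a y z
    exact Or.inl (by simp [hKdef])
  have hw : weight f = 4 := by
    have hcard : T.card = 4 := by
      rw [hT]
      rw [Finset.card_insert_of_notMem (by simp [haa, Prod.ext_iff]),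
        Finset.card_insert_of_notMem (by simp [Prod.ext_iff]),
        Finset.card_insert_of_notMem (by simp [hbb, Prod.ext_iff]),
        Finset.card_singleton]
    rw [weight]
    calc ∑ v, f v = ∑ v ∈ Finset.univ.filter (· ∈ T), 1 := by
          rw [Finset.sum_filter]
    _ = T.card := by rw [Finset.filter_mem_eq_inter, Finset.univ_inter, Finset.sum_const,
          smul_eq_mul, mul_one]
    _ = 4 := hcard
  refine ⟨f, ⟨?_, ?_⟩, hw⟩
  · rw [isWDom_iff]
    refine ⟨hfle, fun v _ => ?_⟩
    obtain ⟨c, y⟩ := v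
    cases c with
    | inl a =>
      have := le_nbrSum G f (hadjLR a b0 y y₀)
      rw [hf1 _ hmem3] at this
      exact this
    | inr b =>
      have := le_nbrSum G f (hadjRL b a0 y y₀)
      rw [hf1 _ hmem1] at this
      exact this
  · intro v hv
    have hvT : v ∉ T := by
      intro h
      rw [hf1 v h] at hv
      omega
    obtain ⟨c, y⟩ := v
    cases c with
    | inl a =>
      refine ⟨(Sum.inr b0, y₀), hadjLR a b0 y y₀, by rw [hf1 _ hmem3]; omega, ?_⟩
      rw [isWDom_iff]
      constructor
      · intro x
        have h1 := hfle x
        have h2 := hfle ((Sum.inr b0 : Fin n ⊕ Fin r), y₀)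
        unfold move
        split_ifs <;> omega
      · intro w _
        obtain ⟨d, z⟩ := w
        cases d with
        | inl a' =>
          refine le_trans (le_of_eq ?_) (le_nbrSum G _ (hadjLR a' b1 z y₀))
          have hne1 : ((Sum.inr b1 : Fin n ⊕ Fin r), y₀) ≠ (Sum.inl a, y) := by simp
          have hne2 : ((Sum.inr b1 : Fin n ⊕ Fin r), y₀) ≠ (Sum.inr b0, y₀) := by
            simp [Ne.symm hbb]
          unfold move
          rw [if_neg hne1, if_neg hne2]
          exact (hf1 _ hmem4).symm
        | inr b' =>
          refine le_trans (le_of_eq ?_) (le_nbrSum G _ (hadjRL b' a0 z y₀))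
          have hne1 : ((Sum.inl a0 : Fin n ⊕ Fin r), y₀) ≠ (Sum.inl a, y) := by
            intro h
            rw [← h] at hvT
            exact hvT hmem1
          have hne2 : ((Sum.inl a0 : Fin n ⊕ Fin r), y₀) ≠ (Sum.inr b0, y₀) := by simp
          unfold move
          rw [if_neg hne1, if_neg hne2]
          exact (hf1 _ hmem1).symm
    | inr b =>
      refine ⟨(Sum.inl a0, y₀), hadjRL b a0 y y₀, by rw [hf1 _ hmem1]; omega, ?_⟩
      rw [isWDom_iff]
      constructor
      · intro x
        have h1 := hfle x
        have h2 := hfle ((Sum.inl a0 : Fin n ⊕ Fin r), y₀)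
        unfold move
        split_ifs <;> omega
      · intro w _
        obtain ⟨d, z⟩ := w
        cases d with
        | inl a' =>
          refine le_trans (le_of_eq ?_) (le_nbrSum G _ (hadjLR a' b0 z y₀))
          have hne1 : ((Sum.inr b0 : Fin n ⊕ Fin r), y₀) ≠ (Sum.inr b, y) := by
            intro h
            rw [← h] at hvT
            exact hvT hmem3
          have hne2 : ((Sum.inr b0 : Fin n ⊕ Fin r), y₀) ≠ (Sum.inl a0, y₀) := by simp
          unfold move
          rw [if_neg hne1, if_neg hne2]
          exact (hf1 _ hmem3).symm
        | inr b' =>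
          refine le_trans (le_of_eq ?_) (le_nbrSum G _ (hadjRL b' a1 z y₀))
          have hne1 : ((Sum.inl a1 : Fin n ⊕ Fin r), y₀) ≠ (Sum.inr b, y) := by simp
          have hne2 : ((Sum.inl a1 : Fin n ⊕ Fin r), y₀) ≠ (Sum.inl a0, y₀) := by
            simp [Ne.symm haa]
          unfold move
          rw [if_neg hne1, if_neg hne2]
          exact (hf1 _ hmem2).symm

lemma move_irrel {V : Type*} (i1 i2 : DecidableEq V) (f : V → ℕ) (u v : V) :
    @move V i1 f u v = @move V i2 f u v := by
  funext x
  unfold move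
  by_cases h1 : x = v
  · rw [if_pos h1, if_pos h1]
  · rw [if_neg h1, if_neg h1]
    by_cases h2 : x = u
    · rw [if_pos h2, if_pos h2]
    · rw [if_neg h2, if_neg h2]

lemma lower {β : Type*} [Fintype β] (n r : ℕ) (hn : 4 ≤ n) (hr : 4 ≤ r)
    (H : SimpleGraph β) (hH : Nontrivial β)
    (f : (Fin n ⊕ Fin r) × β → ℕ)
    (hf : IsSecureWDom (lexProd (completeBipartiteGraph (Fin n) (Fin r)) H) [1, 0] f) :
    4 ≤ weight f := by
  classical
  obtain ⟨y₀, -, -⟩ := hH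
  by_contra hlt
  push_neg at hlt
  set K := completeBipartiteGraph (Fin n) (Fin r) with hKdef
  set G := lexProd K H with hGdef
  obtain ⟨hfle, hdom⟩ := (isWDom_iff G f).mp hf.1
  have hLR : (∑ a : Fin n, ∑ y, f (Sum.inl a, y)) + (∑ b : Fin r, ∑ y, f (Sum.inr b, y))
      = weight f := by
    rw [weight, Fintype.sum_prod_type, Fintype.sum_sum_type]
  -- the right side carries weight
  have hR1 : 1 ≤ ∑ b : Fin r, ∑ y, f (Sum.inr b, y) := by
    by_contra hR0
    push_neg at hR0
    have hR0 : (∑ b : Fin r, ∑ y, f (Sum.inr b, y)) = 0 := by omega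
    have hright : ∀ (b : Fin r) (y : β), f (Sum.inr b, y) = 0 := by
      intro b y
      exact Finset.sum_eq_zero_iff.mp
        (Finset.sum_eq_zero_iff.mp hR0 b (Finset.mem_univ b)) y (Finset.mem_univ y)
    obtain ⟨a, ha⟩ := exists_sum_zero (fun a : Fin n => ∑ y, f (Sum.inl a, y)) (by
      show (∑ a : Fin n, ∑ y, f (Sum.inl a, y)) < Fintype.card (Fin n)
      rw [Fintype.card_fin]; omega)
    have hleft : ∀ y, f (Sum.inl a, y) = 0 := fun y =>
      Finset.sum_eq_zero_iff.mp ha y (Finset.mem_univ y)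
    have h1 := hdom (Sum.inl a, y₀) (hleft y₀)
    have h0 : nbrSum G f (Sum.inl a, y₀) = 0 := by
      apply nbrSum_eq_zero
      rintro ⟨c, z⟩ (h | ⟨heq, -⟩)
      · cases c with
        | inl a' => simp [hKdef] at h
        | inr b => exact hright b z
      · obtain rfl : Sum.inl a = c := heq
        exact hleft z
    omega
  -- the left side carries weight
  have hL1 : 1 ≤ ∑ a : Fin n, ∑ y, f (Sum.inl a, y) := by
    by_contra hL0
    push_neg at hL0
    have hL0 : (∑ a : Fin n, ∑ y, f (Sum.inl a, y)) = 0 := by omega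
    have hleft : ∀ (a : Fin n) (y : β), f (Sum.inl a, y) = 0 := by
      intro a y
      exact Finset.sum_eq_zero_iff.mp
        (Finset.sum_eq_zero_iff.mp hL0 a (Finset.mem_univ a)) y (Finset.mem_univ y)
    obtain ⟨b, hb⟩ := exists_sum_zero (fun b : Fin r => ∑ y, f (Sum.inr b, y)) (by
      show (∑ b : Fin r, ∑ y, f (Sum.inr b, y)) < Fintype.card (Fin r)
      rw [Fintype.card_fin]; omega)
    have hright : ∀ y, f (Sum.inr b, y) = 0 := fun y =>
      Finset.sum_eq_zero_iff.mp hb y (Finset.mem_univ y)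
    have h1 := hdom (Sum.inr b, y₀) (hright y₀)
    have h0 : nbrSum G f (Sum.inr b, y₀) = 0 := by
      apply nbrSum_eq_zero
      rintro ⟨c, z⟩ (h | ⟨heq, -⟩)
      · cases c with
        | inl a => exact hleft a z
        | inr b' => simp [hKdef] at h
      · obtain rfl : Sum.inr b = c := heq
        exact hright z
    omega
  have hcase : (∑ a : Fin n, ∑ y, f (Sum.inl a, y)) = 1 ∨
      (∑ b : Fin r, ∑ y, f (Sum.inr b, y)) = 1 := by omega
  rcases hcase with hL | hR
  · -- left side has exactly one unit of weight
    have hps : ∑ p : Fin n × β, f (Sum.inl p.1, p.2) = 1 := by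
      rw [Fintype.sum_prod_type]; exact hL
    obtain ⟨p, hp⟩ : ∃ p : Fin n × β, f (Sum.inl p.1, p.2) ≠ 0 := by
      by_contra h
      push_neg at h
      rw [Finset.sum_eq_zero (fun p _ => h p)] at hps
      omega
    have hp1 : f (Sum.inl p.1, p.2) = 1 :=
      le_antisymm (hfle _) (Nat.one_le_iff_ne_zero.mpr hp)
    have huniq : ∀ q : Fin n × β, q ≠ p → f (Sum.inl q.1, q.2) = 0 := by
      intro q hq
      have hsub := Finset.sum_le_sum_of_subset
        (f := fun q : Fin n × β => f (Sum.inl q.1, q.2)) (Finset.subset_univ {p, q})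
      rw [Finset.sum_pair (Ne.symm hq), hps] at hsub
      omega
    obtain ⟨b, hb⟩ := exists_sum_zero (fun b : Fin r => ∑ y, f (Sum.inr b, y)) (by
      show (∑ b : Fin r, ∑ y, f (Sum.inr b, y)) < Fintype.card (Fin r)
      rw [Fintype.card_fin]; omega)
    have hbz : ∀ y, f (Sum.inr b, y) = 0 := fun y =>
      Finset.sum_eq_zero_iff.mp hb y (Finset.mem_univ y)
    obtain ⟨u, huadj, hupos, hgdom⟩ := hf.2 (Sum.inr b, y₀) (hbz y₀)
    have hu : u = (Sum.inl p.1, p.2) := by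
      obtain ⟨c, z⟩ := u
      rcases huadj with h | ⟨heq, -⟩
      · cases c with
        | inl a' =>
          have h0 : (a', z) = p := by
            by_contra hne
            have h0 : f (Sum.inl a', z) = 0 := huniq (a', z) hne
            omega
          rw [← h0]
        | inr b' => simp [hKdef] at h
      · obtain rfl : Sum.inr b = c := heq
        exact absurd hupos (by simp [hbz z])
    rw [hu] at hgdom
    have hgdom' : IsWDom G [1, 0] (move f (Sum.inl p.1, p.2) (Sum.inr b, y₀)) := by
      convert hgdom using 1
      exact move_irrel _ _ _ _ _
    obtain ⟨hgle, hgdom2⟩ := (isWDom_iff G _).mp hgdom'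
    have hgleft : ∀ (a : Fin n) (z : β),
        move f (Sum.inl p.1, p.2) (Sum.inr b, y₀) (Sum.inl a, z) = 0 := by
      intro a z
      unfold move
      rw [if_neg (by simp)]
      by_cases h : ((Sum.inl a : Fin n ⊕ Fin r), z) = (Sum.inl p.1, p.2)
      · rw [if_pos h]
        omega
      · rw [if_neg h]
        apply huniq (a, z)
        intro he
        apply h
        rw [← he]
    have hgR : (∑ b' : Fin r, ∑ y,
        move f (Sum.inl p.1, p.2) (Sum.inr b, y₀) (Sum.inr b', y)) ≤ 3 := by
      have hb1 : ∀ q : Fin r × β,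
          move f (Sum.inl p.1, p.2) (Sum.inr b, y₀) (Sum.inr q.1, q.2)
            ≤ f (Sum.inr q.1, q.2) + (if q = (b, y₀) then 1 else 0) := by
        intro q
        refine le_trans (move_le f _ _ _) ?_
        have hcond : ((Sum.inr q.1 : Fin n ⊕ Fin r), q.2) = (Sum.inr b, y₀) ↔ q = (b, y₀) := by
          simp [Prod.ext_iff]
        rw [if_congr hcond rfl rfl]
      calc (∑ b' : Fin r, ∑ y, move f (Sum.inl p.1, p.2) (Sum.inr b, y₀) (Sum.inr b', y))
          ≤ ∑ b' : Fin r, ∑ y, (f (Sum.inr b', y) + if ((b' : Fin r), y) = (b, y₀) then 1 else 0) := by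
            refine Finset.sum_le_sum (fun b' _ => Finset.sum_le_sum (fun y _ => ?_))
            exact hb1 (b', y)
        _ = (∑ b' : Fin r, ∑ y, f (Sum.inr b', y)) +
            ∑ b' : Fin r, ∑ y, (if ((b' : Fin r), y) = (b, y₀) then 1 else 0) := by
            simp [Finset.sum_add_distrib]
        _ ≤ 3 := by
            have hind : (∑ b' : Fin r, ∑ y, (if ((b' : Fin r), y) = (b, y₀) then 1 else 0)) = 1 := by
              have hstep : ∀ b' : Fin r,
                  (∑ y, if ((b' : Fin r), y) = (b, y₀) then 1 else 0)
                    = if b' = b then 1 else 0 := by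
                intro b'
                by_cases h : b' = b
                · subst h
                  simp [Prod.ext_iff]
                · simp [Prod.ext_iff, h]
              rw [Finset.sum_congr rfl (fun b' _ => hstep b')]
              simp
            rw [hind]
            omega
    obtain ⟨b2, hb2⟩ := exists_sum_zero
      (fun b' : Fin r => ∑ y, move f (Sum.inl p.1, p.2) (Sum.inr b, y₀) (Sum.inr b', y)) (by
        show (∑ b' : Fin r, ∑ y, move f (Sum.inl p.1, p.2) (Sum.inr b, y₀) (Sum.inr b', y))
          < Fintype.card (Fin r)
        rw [Fintype.card_fin]; omega)
    have hb2z : ∀ z, move f (Sum.inl p.1, p.2) (Sum.inr b, y₀) (Sum.inr b2, z) = 0 := fun z =>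
      Finset.sum_eq_zero_iff.mp hb2 z (Finset.mem_univ z)
    have hcontr := hgdom2 (Sum.inr b2, y₀) (hb2z y₀)
    have h0 : nbrSum G (move f (Sum.inl p.1, p.2) (Sum.inr b, y₀)) (Sum.inr b2, y₀) = 0 := by
      apply nbrSum_eq_zero
      rintro ⟨c, z⟩ (h | ⟨heq, -⟩)
      · cases c with
        | inl a' => exact hgleft a' z
        | inr b' => simp [hKdef] at h
      · obtain rfl : Sum.inr b2 = c := heq
        exact hb2z z
    omega
  · -- right side has exactly one unit of weight
    have hps : ∑ p : Fin r × β, f (Sum.inr p.1, p.2) = 1 := by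
      rw [Fintype.sum_prod_type]; exact hR
    obtain ⟨p, hp⟩ : ∃ p : Fin r × β, f (Sum.inr p.1, p.2) ≠ 0 := by
      by_contra h
      push_neg at h
      rw [Finset.sum_eq_zero (fun p _ => h p)] at hps
      omega
    have hp1 : f (Sum.inr p.1, p.2) = 1 :=
      le_antisymm (hfle _) (Nat.one_le_iff_ne_zero.mpr hp)
    have huniq : ∀ q : Fin r × β, q ≠ p → f (Sum.inr q.1, q.2) = 0 := by
      intro q hq
      have hsub := Finset.sum_le_sum_of_subset
        (f := fun q : Fin r × β => f (Sum.inr q.1, q.2)) (Finset.subset_univ {p, q})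
      rw [Finset.sum_pair (Ne.symm hq), hps] at hsub
      omega
    obtain ⟨a, ha⟩ := exists_sum_zero (fun a : Fin n => ∑ y, f (Sum.inl a, y)) (by
      show (∑ a : Fin n, ∑ y, f (Sum.inl a, y)) < Fintype.card (Fin n)
      rw [Fintype.card_fin]; omega)
    have haz : ∀ y, f (Sum.inl a, y) = 0 := fun y =>
      Finset.sum_eq_zero_iff.mp ha y (Finset.mem_univ y)
    obtain ⟨u, huadj, hupos, hgdom⟩ := hf.2 (Sum.inl a, y₀) (haz y₀)
    have hu : u = (Sum.inr p.1, p.2) := by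
      obtain ⟨c, z⟩ := u
      rcases huadj with h | ⟨heq, -⟩
      · cases c with
        | inl a' => simp [hKdef] at h
        | inr b' =>
          have h0 : (b', z) = p := by
            by_contra hne
            have h0 : f (Sum.inr b', z) = 0 := huniq (b', z) hne
            omega
          rw [← h0]
      · obtain rfl : Sum.inl a = c := heq
        exact absurd hupos (by simp [haz z])
    rw [hu] at hgdom
    have hgdom' : IsWDom G [1, 0] (move f (Sum.inr p.1, p.2) (Sum.inl a, y₀)) := by
      convert hgdom using 1
      exact move_irrel _ _ _ _ _
    obtain ⟨hgle, hgdom2⟩ := (isWDom_iff G _).mp hgdom'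
    have hgright : ∀ (b : Fin r) (z : β),
        move f (Sum.inr p.1, p.2) (Sum.inl a, y₀) (Sum.inr b, z) = 0 := by
      intro b z
      unfold move
      rw [if_neg (by simp)]
      by_cases h : ((Sum.inr b : Fin n ⊕ Fin r), z) = (Sum.inr p.1, p.2)
      · rw [if_pos h]
        omega
      · rw [if_neg h]
        apply huniq (b, z)
        intro he
        apply h
        rw [← he]
    have hgL : (∑ a' : Fin n, ∑ y,
        move f (Sum.inr p.1, p.2) (Sum.inl a, y₀) (Sum.inl a', y)) ≤ 3 := by
      have hb1 : ∀ q : Fin n × β,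
          move f (Sum.inr p.1, p.2) (Sum.inl a, y₀) (Sum.inl q.1, q.2)
            ≤ f (Sum.inl q.1, q.2) + (if q = (a, y₀) then 1 else 0) := by
        intro q
        refine le_trans (move_le f _ _ _) ?_
        have hcond : ((Sum.inl q.1 : Fin n ⊕ Fin r), q.2) = (Sum.inl a, y₀) ↔ q = (a, y₀) := by
          simp [Prod.ext_iff]
        rw [if_congr hcond rfl rfl]
      calc (∑ a' : Fin n, ∑ y, move f (Sum.inr p.1, p.2) (Sum.inl a, y₀) (Sum.inl a', y))
          ≤ ∑ a' : Fin n, ∑ y, (f (Sum.inl a', y) + if ((a' : Fin n), y) = (a, y₀) then 1 else 0) := by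
            refine Finset.sum_le_sum (fun a' _ => Finset.sum_le_sum (fun y _ => ?_))
            exact hb1 (a', y)
        _ = (∑ a' : Fin n, ∑ y, f (Sum.inl a', y)) +
            ∑ a' : Fin n, ∑ y, (if ((a' : Fin n), y) = (a, y₀) then 1 else 0) := by
            simp [Finset.sum_add_distrib]
        _ ≤ 3 := by
            have hind : (∑ a' : Fin n, ∑ y, (if ((a' : Fin n), y) = (a, y₀) then 1 else 0)) = 1 := by
              have hstep : ∀ a' : Fin n,
                  (∑ y, if ((a' : Fin n), y) = (a, y₀) then 1 else 0)
                    = if a' = a then 1 else 0 := by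
                intro a'
                by_cases h : a' = a
                · subst h
                  simp [Prod.ext_iff]
                · simp [Prod.ext_iff, h]
              rw [Finset.sum_congr rfl (fun a' _ => hstep a')]
              simp
            rw [hind]
            omega
    obtain ⟨a2, ha2⟩ := exists_sum_zero
      (fun a' : Fin n => ∑ y, move f (Sum.inr p.1, p.2) (Sum.inl a, y₀) (Sum.inl a', y)) (by
        show (∑ a' : Fin n, ∑ y, move f (Sum.inr p.1, p.2) (Sum.inl a, y₀) (Sum.inl a', y))
          < Fintype.card (Fin n)
        rw [Fintype.card_fin]; omega)
    have ha2z : ∀ z, move f (Sum.inr p.1, p.2) (Sum.inl a, y₀) (Sum.inl a2, z) = 0 := fun z =>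
      Finset.sum_eq_zero_iff.mp ha2 z (Finset.mem_univ z)
    have hcontr := hgdom2 (Sum.inl a2, y₀) (ha2z y₀)
    have h0 : nbrSum G (move f (Sum.inr p.1, p.2) (Sum.inl a, y₀)) (Sum.inl a2, y₀) = 0 := by
      apply nbrSum_eq_zero
      rintro ⟨c, z⟩ (h | ⟨heq, -⟩)
      · cases c with
        | inl a' => simp [hKdef] at h
        | inr b' => exact hgright b' z
      · obtain rfl : Sum.inl a2 = c := heq
        exact ha2z z
    omega

end MyAux

open SecureW in
theorem stmt_8 {β : Type*} [Fintype β] (n r : ℕ) (hn : 4 ≤ n) (hr : 4 ≤ r)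
    (H : SimpleGraph β) (hH : Nontrivial β) :
    secWDomNum (lexProd (completeBipartiteGraph (Fin n) (Fin r)) H) [1, 0] = 4 := by
  obtain ⟨f₀, hsec, hw⟩ := MyAux.upper n r hn hr H hH
  refine le_antisymm (Nat.sInf_le ⟨f₀, hsec, hw⟩) (le_csInf ⟨4, f₀, hsec, hw⟩ ?_)
  rintro k ⟨f, hf, rfl⟩
  exact MyAux.lower n r hn hr H hH f hf
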